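/- Sign characterization in Dinkelbach's method: with R, P : S → ℝ, P > 0, S nonempty and the supremum attained, let η* = max_{x∈S} R(x)/P(x). Then G(η) > 0 for η < η*, G(η*) = 0, and G(η) < 0 for η > η*, where G(η) = max_{x∈S}(R(x) − η P(x)). -/

import Mathlib

/-- Sign characterization in Dinkelbach's method: `G(η) > 0` for `η < η*`,
`G(η*) = 0`, `G(η) < 0` for `η > η*`, where maxima are attained via `M`. -/
theorem dinkelbach_sign_characterization {S : Type*} [Nonempty S]
    (R P : S → ℝ) (hP : ∀ x, 0 < P x)
    (xstar : S) (hmax : ∀ x, R x / P x ≤ R xstar / P xstar)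
    (M : ℝ → S) (hM : ∀ η x, R x - η * P x ≤ R (M η) - η * P (M η)) :
    (∀ η, η < R xstar / P xstar → 0 < R (M η) - η * P (M η)) ∧
      (R (M (R xstar / P xstar)) - (R xstar / P xstar) * P (M (R xstar / P xstar)) = 0) ∧
      (∀ η, R xstar / P xstar < η → R (M η) - η * P (M η) < 0) := by
  set e := R xstar / P xstar with he
  have hRstar : R xstar = e * P xstar := by
    rw [he, div_mul_cancel₀ _ (hP xstar).ne']
  have hle : ∀ x, R x - e * P x ≤ 0 := by
    intro x
    have := (div_le_iff₀ (hP x)).mp (hmax x)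
    linarith
  refine ⟨?_, ?_, ?_⟩
  · intro η hη
    have h1 : 0 < R xstar - η * P xstar := by
      nlinarith [hP xstar]
    exact lt_of_lt_of_le h1 (hM η xstar)
  · have h1 := hle (M e)
    have h2 := hM e xstar
    rw [← hRstar] at h2
    linarith
  · intro η hη
    have h1 := hle (M η)
    have h2 := hP (M η)
    nlinarith
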